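/- The map h/k ↦ (2h-k)/h is an order-preserving bijection from the right halfsequence F^{≥1/2}(B(2m), m) onto the Farey sequence F_m, with inverse h/k ↦ k/(2k-h). -/

import Mathlib

/-- The Farey sequence of order `m`: rationals in `[0,1]` with denominator at most `m`. -/
def Farey (m : ℕ) : Set ℚ := {q | 0 ≤ q ∧ q ≤ 1 ∧ q.den ≤ m}

/-- The Farey subsequence `F(B(2m), m)`: fractions `h/k` in lowest terms with
`0 ≤ h/k ≤ 1`, `k ≤ 2m` and `k - m ≤ h ≤ m`. -/
def FareyB (m : ℕ) : Set ℚ :=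
  {q | 0 ≤ q ∧ q ≤ 1 ∧ q.den ≤ 2 * m ∧ (q.den : ℤ) - m ≤ q.num ∧ q.num ≤ m}

/-- The left halfsequence `F^{≤1/2}(B(2m), m)`. -/
def FareyBLeft (m : ℕ) : Set ℚ := {q ∈ FareyB m | q ≤ 1/2}

/-- The right halfsequence `F^{≥1/2}(B(2m), m)`. -/
def FareyBRight (m : ℕ) : Set ℚ := {q ∈ FareyB m | 1/2 ≤ q}

lemma fwd_num_den (q : ℚ) (hq : 1/2 ≤ q) :
    ((2*q-1)/q).num = 2*q.num - q.den ∧ (((2*q-1)/q).den : ℤ) = q.num := by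
  have hq0 : 0 < q := lt_of_lt_of_le (by norm_num) hq
  have hn : 0 < q.num := Rat.num_pos.mpr hq0
  have hd : (q.den : ℚ) ≠ 0 := by exact_mod_cast q.den_ne_zero
  have hnQ : (q.num : ℚ) ≠ 0 := by exact_mod_cast hn.ne'
  have hrw : (2*q-1)/q = ((2*q.num - q.den : ℤ) : ℚ) / ((q.num : ℤ) : ℚ) := by
    conv_lhs => rw [← Rat.num_div_den q]
    push_cast
    field_simp
  have hco : IsCoprime (q.num : ℤ) (q.den : ℤ) :=
    Int.isCoprime_iff_gcd_eq_one.mpr q.reduced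
  have hco2 : IsCoprime (2*q.num - q.den) q.num := by
    have := (hco.symm.neg_left.add_mul_left_left 2)
    have h1 : -(q.den:ℤ) + q.num * 2 = 2*q.num - q.den := by ring
    rwa [h1] at this
  have hcop : Nat.Coprime (2*q.num - q.den).natAbs (q.num).natAbs :=
    Int.isCoprime_iff_gcd_eq_one.mp hco2
  exact ⟨by rw [hrw]; exact Rat.num_div_eq_of_coprime hn hcop,
    by rw [hrw]; exact Rat.den_div_eq_of_coprime hn hcop⟩

lemma inv_num_den (p : ℚ) (hp : 0 ≤ p) (hp1 : p ≤ 1) :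
    (1/(2-p)).num = p.den ∧ ((1/(2-p)).den : ℤ) = 2*p.den - p.num := by
  have hn : 0 ≤ p.num := Rat.num_nonneg.mpr hp
  have hnd : p.num ≤ p.den := by
    rw [← Rat.num_div_den p, div_le_one (by exact_mod_cast p.pos : (0:ℚ) < p.den)] at hp1
    exact_mod_cast hp1
  have hpos : 0 < 2*(p.den:ℤ) - p.num := by
    have : 0 < (p.den:ℤ) := by exact_mod_cast p.pos
    omega
  have hdQ : (p.den : ℚ) ≠ 0 := by exact_mod_cast p.den_ne_zero
  have h2Q : ((2*(p.den:ℤ) - p.num : ℤ) : ℚ) ≠ 0 := by exact_mod_cast hpos.ne'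
  have hrw : 1/(2-p) = ((p.den : ℤ) : ℚ) / ((2*p.den - p.num : ℤ) : ℚ) := by
    conv_lhs => rw [← Rat.num_div_den p]
    push_cast
    have h2Q' : (2 : ℚ) - (p.num:ℚ)/(p.den:ℚ) ≠ 0 := by
      push_cast at h2Q
      intro h
      apply h2Q
      field_simp at h
      linarith
    field_simp
  have hco : IsCoprime (p.num : ℤ) (p.den : ℤ) :=
    Int.isCoprime_iff_gcd_eq_one.mpr p.reduced
  have hco2 : IsCoprime ((p.den:ℤ)) (2*p.den - p.num) := by
    have := (hco.symm.neg_right.add_mul_right_right 2)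
    have h1 : -(p.num:ℤ) + 2 * p.den = 2*p.den - p.num := by ring
    rwa [h1] at this
  have hcop : Nat.Coprime ((p.den:ℤ)).natAbs (2*(p.den:ℤ) - p.num).natAbs :=
    Int.isCoprime_iff_gcd_eq_one.mp hco2
  exact ⟨by rw [hrw]; exact Rat.num_div_eq_of_coprime hpos hcop,
    by rw [hrw]; exact Rat.den_div_eq_of_coprime hpos hcop⟩

theorem fareyBRight_to_farey (m : ℕ) (hm : 1 < m) :
    Set.BijOn (fun q : ℚ => (2 * q - 1) / q) (FareyBRight m) (Farey m) ∧
      StrictMonoOn (fun q : ℚ => (2 * q - 1) / q) (FareyBRight m) ∧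
      Set.InvOn (fun q : ℚ => 1 / (2 - q)) (fun q : ℚ => (2 * q - 1) / q)
        (FareyBRight m) (Farey m) := by
  have hmaps1 : Set.MapsTo (fun q : ℚ => (2 * q - 1) / q) (FareyBRight m) (Farey m) := by
    rintro q ⟨⟨h0, h1, hden, hlow, hupp⟩, hhalf⟩
    have hq0 : (0:ℚ) < q := lt_of_lt_of_le (by norm_num) hhalf
    obtain ⟨hnum, hd⟩ := fwd_num_den q hhalf
    refine ⟨div_nonneg (by linarith) hq0.le, ?_, ?_⟩
    · rw [div_le_one hq0]; linarith
    · show ((2 * q - 1) / q).den ≤ m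
      have := Rat.num_pos.mpr hq0
      omega
  have hmaps2 : Set.MapsTo (fun q : ℚ => 1 / (2 - q)) (Farey m) (FareyBRight m) := by
    rintro p ⟨h0, h1, hden⟩
    have h2 : (0:ℚ) < 2 - p := by linarith
    obtain ⟨hnum, hd⟩ := inv_num_den p h0 h1
    have hnn : 0 ≤ p.num := Rat.num_nonneg.mpr h0
    have hdm : (p.den : ℤ) ≤ m := by exact_mod_cast hden
    refine ⟨⟨div_nonneg (by norm_num) h2.le, ?_, ?_, ?_, ?_⟩, ?_⟩
    · rw [div_le_one h2]; linarith
    · show (1 / (2 - p)).den ≤ 2 * m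
      omega
    · show ((1 / (2 - p)).den : ℤ) - m ≤ (1 / (2 - p)).num
      rw [hd, hnum]; omega
    · show (1 / (2 - p)).num ≤ m
      rw [hnum]; omega
    · rw [div_le_div_iff₀ (by norm_num) h2]; linarith
  have hinv : Set.InvOn (fun q : ℚ => 1 / (2 - q)) (fun q : ℚ => (2 * q - 1) / q)
      (FareyBRight m) (Farey m) := by
    constructor
    · rintro q ⟨⟨h0, h1, -⟩, hhalf⟩
      have hq0 : (0:ℚ) < q := lt_of_lt_of_le (by norm_num) hhalf
      simp only
      have h : 2 - (2*q-1)/q = 1/q := by field_simp; ring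
      rw [h, one_div_one_div]
    · rintro p ⟨h0, h1, -⟩
      have h2 : (0:ℚ) < 2 - p := by linarith
      simp only
      have hne : (1:ℚ)/(2-p) ≠ 0 := by positivity
      field_simp
      ring
  have hmono : StrictMonoOn (fun q : ℚ => (2 * q - 1) / q) (FareyBRight m) := by
    rintro a ⟨-, ha⟩ b ⟨-, hb⟩ hab
    have ha0 : (0:ℚ) < a := lt_of_lt_of_le (by norm_num) ha
    have hb0 : (0:ℚ) < b := lt_of_lt_of_le (by norm_num) hb
    simp only
    rw [div_lt_div_iff₀ ha0 hb0]
    nlinarith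
  exact ⟨hinv.bijOn hmaps1 hmaps2, hmono, hinv⟩
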